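/- Let $w : [0,\infty) \to (0,\infty)$ be nonincreasing and locally integrable, and define $\mu(E) = \int_E w\,dx$ for Borel sets $E \subset [0,\infty)$. Then for all $0 < r < R$, $\mu([0,R)) - \mu([0,r)) \le 2\,(1 - r/R)\,\mu([0,R))$; that is, $\mu$ has the 1-annular decay property at $0$ with constant $2$. -/

import Mathlib

open MeasureTheory Set

theorem stmt_6 (w : ℝ → ℝ)
    (hpos : ∀ x ∈ Set.Ici (0:ℝ), 0 < w x)
    (hmono : AntitoneOn w (Set.Ici (0:ℝ)))
    (hint : ∀ R : ℝ, 0 < R → IntegrableOn w (Set.Ico 0 R)) :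
    ∀ r R : ℝ, 0 < r → r < R →
      (∫ x in Set.Ico (0:ℝ) R, w x) - (∫ x in Set.Ico (0:ℝ) r, w x) ≤
        2 * (1 - r / R) * ∫ x in Set.Ico (0:ℝ) R, w x := by
  intro r R hr hrR
  have h0r : (0:ℝ) ≤ r := hr.le
  have hR : (0:ℝ) < R := hr.trans hrR
  have hIR : IntegrableOn w (Set.Ico 0 R) := hint R hR
  have hIr : IntegrableOn w (Set.Ico 0 r) := hIR.mono_set (Set.Ico_subset_Ico_right hrR.le)
  have hIrR : IntegrableOn w (Set.Ico r R) := hIR.mono_set (Set.Ico_subset_Ico_left h0r)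
  have hsplit : (∫ x in Set.Ico (0:ℝ) R, w x)
      = (∫ x in Set.Ico (0:ℝ) r, w x) + ∫ x in Set.Ico r R, w x := by
    rw [← MeasureTheory.setIntegral_union (Set.Ico_disjoint_Ico_same)
      measurableSet_Ico hIr hIrR, Set.Ico_union_Ico_eq_Ico h0r hrR.le]
  have hwr : 0 < w r := hpos r h0r
  have hconst : IntegrableOn (fun _ : ℝ => w r) (Set.Ico r R) := by
    exact integrableOn_const measure_Ico_lt_top.ne
  have hconst' : IntegrableOn (fun _ : ℝ => w r) (Set.Ico 0 r) := by
    exact integrableOn_const measure_Ico_lt_top.ne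
  have hCval : (∫ _x in Set.Ico r R, w r) = (R - r) * w r := by
    rw [MeasureTheory.setIntegral_const, Measure.real, Real.volume_Ico,
      ENNReal.toReal_ofReal (by linarith), smul_eq_mul]
  have hCval' : (∫ _x in Set.Ico (0:ℝ) r, w r) = r * w r := by
    rw [MeasureTheory.setIntegral_const, Measure.real, Real.volume_Ico,
      ENNReal.toReal_ofReal (by linarith), smul_eq_mul, sub_zero]
  have h1 : (∫ x in Set.Ico r R, w x) ≤ (R - r) * w r := by
    rw [← hCval]
    apply MeasureTheory.setIntegral_mono_on hIrR hconst measurableSet_Ico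
    intro x hx
    exact hmono h0r (le_trans h0r hx.1) hx.1
  have h2 : r * w r ≤ ∫ x in Set.Ico (0:ℝ) r, w x := by
    rw [← hCval']
    apply MeasureTheory.setIntegral_mono_on hconst' hIr measurableSet_Ico
    intro x hx
    exact hmono hx.1 h0r hx.2.le
  have hA0 : 0 ≤ ∫ x in Set.Ico (0:ℝ) r, w x :=
    MeasureTheory.setIntegral_nonneg measurableSet_Ico fun x hx => (hpos x hx.1).le
  have hC0 : 0 ≤ ∫ x in Set.Ico r R, w x :=
    MeasureTheory.setIntegral_nonneg measurableSet_Ico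
      fun x hx => (hpos x (le_trans h0r hx.1)).le
  set A := ∫ x in Set.Ico (0:ℝ) r, w x with hA
  set B := ∫ x in Set.Ico (0:ℝ) R, w x with hB
  set C := ∫ x in Set.Ico r R, w x with hC
  have hBeq : B = A + C := hsplit
  have hB0 : 0 ≤ B := by linarith
  have key : 2 * (1 - r / R) * B = (2 * (R - r) * B) / R := by
    field_simp
  rw [key, le_div_iff₀ hR]
  -- goal : (B - A) * R ≤ 2 * (R - r) * B
  rcases le_or_gt R (2 * r) with hcase | hcase
  · -- C * R ≤ (R-r)*w r * R ≤ (R-r)*w r*2r ≤ 2(R-r)A ≤ 2(R-r)B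
    nlinarith [mul_le_mul_of_nonneg_left h2 (by linarith : (0:ℝ) ≤ 2 * (R - r)),
      mul_le_mul_of_nonneg_right h1 hR.le, mul_pos hr hwr]
  · nlinarith [mul_le_mul_of_nonneg_left hA0 (by linarith : (0:ℝ) ≤ R)]
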